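/- Let n ≥ 8 and let H ≤ S_n be a subgroup whose set of fixed points on {1,…,n} is exactly {n}. Let d be an integer with 3 ≤ d ≤ (n−1)/2 such that O_2(H) = O_3(H) = ⋯ = O_d(H). Then H acts d-homogeneously on {1,…,n−1}. -/
import Mathlib


open Pointwise

/-- The number of orbits of a group `H` acting on a finite set `Ω` on the collection
of finsets of `Ω` satisfying the predicate `P` (for the induced action on finsets). -/
noncomputable def numOrbits (H : Type*) [Group H] {Ω : Type*} [DecidableEq Ω] [MulAction H Ω]
    (P : Finset Ω → Prop) : ℕ :=
  Nat.card (Quot (fun S T : {S : Finset Ω // P S} => ∃ h : H, h • S.val = T.val))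

/-- A subgroup `H` of `Sym(Ω)` acts `d`-homogeneously on `A ⊆ Ω` if it is
transitive on `d`-element subsets of `A`. -/
def IsHomogeneousOn {Ω : Type*} [DecidableEq Ω] (H : Subgroup (Equiv.Perm Ω))
    (A : Finset Ω) (d : ℕ) : Prop :=
  ∀ S T : Finset Ω, S ⊆ A → T ⊆ A → S.card = d → T.card = d → ∃ h ∈ H, h • S = T

section Helpers
variable {G Ω : Type*} [Group G] [DecidableEq Ω] [MulAction G Ω]

lemma smul_finset_eq_image (g : G) (S : Finset Ω) : g • S = S.image (fun x => g • x) :=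
  Finset.smul_finset_def

lemma smul_erase (g : G) (S : Finset Ω) (x : Ω) : g • (S.erase x) = (g • S).erase (g • x) := by
  simp only [Finset.smul_finset_def]
  exact Finset.image_erase (MulAction.injective g) S x

lemma smul_insert (g : G) (S : Finset Ω) (x : Ω) : g • (insert x S) = insert (g • x) (g • S) := by
  simp only [Finset.smul_finset_def]
  exact Finset.image_insert _ x S

lemma mem_smul_iff_of_fixed {g : G} {x : Ω} (hg : g • x = x) (S : Finset Ω) :
    x ∈ g • S ↔ x ∈ S := by
  rw [Finset.mem_smul_finset]
  constructor
  · rintro ⟨y, hy, hyx⟩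
    have : y = x := MulAction.injective g (hyx.trans hg.symm)
    rwa [this] at hy
  · intro hx; exact ⟨x, hx, hg⟩

end Helpers

section NumOrbits
variable {G Ω : Type*} [Group G] [DecidableEq Ω] [MulAction G Ω] [Finite Ω]

noncomputable def quotSplit {α : Type*} (r : α → α → Prop) (P Q : α → Prop)
    (hQ : ∀ a b : α, r a b → (Q a ↔ Q b)) :
    Quot (fun x y : {a // P a} => r x.1 y.1) ≃
      (Quot (fun x y : {a // P a ∧ Q a} => r x.1 y.1) ⊕
        Quot (fun x y : {a // P a ∧ ¬Q a} => r x.1 y.1)) := by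
  classical
  refine
    { toFun := Quot.lift (fun x => if h : Q x.1 then
        Sum.inl (Quot.mk _ ⟨x.1, x.2, h⟩) else Sum.inr (Quot.mk _ ⟨x.1, x.2, h⟩)) ?_
      invFun := Sum.elim
        (Quot.lift (fun x => Quot.mk (fun x y : {a // P a} => r x.1 y.1) ⟨x.1, x.2.1⟩)
          (fun a b hab => Quot.sound hab))
        (Quot.lift (fun x => Quot.mk (fun x y : {a // P a} => r x.1 y.1) ⟨x.1, x.2.1⟩)
          (fun a b hab => Quot.sound hab))
      left_inv := ?_
      right_inv := ?_ }
  · intro a b hab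
    by_cases ha : Q a.1
    · have hb' : Q b.1 := (hQ _ _ hab).mp ha
      simp only [dif_pos ha, dif_pos hb']
      exact congrArg Sum.inl (Quot.sound hab)
    · have hb' : ¬ Q b.1 := fun h => ha ((hQ _ _ hab).mpr h)
      simp only [dif_neg ha, dif_neg hb']
      exact congrArg Sum.inr (Quot.sound hab)
  · rintro ⟨x⟩
    by_cases h : Q x.1 <;> simp [h]
  · rintro (x|x) <;> induction x using Quot.ind with
    | _ x => simp [x.2.2]

/-- Splitting numOrbits by membership of a fixed point. -/
lemma numOrbits_split (G' : Type*) [Group G'] [MulAction G' Ω] (b : Ω)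
    (hbfix : ∀ h : G', h • b = b) (P : Finset Ω → Prop) :
    numOrbits G' P = numOrbits G' (fun S => P S ∧ b ∈ S) + numOrbits G' (fun S => P S ∧ b ∉ S) := by
  haveI := Fintype.ofFinite Ω
  unfold numOrbits
  rw [← Nat.card_sum]
  apply Nat.card_congr
  exact quotSplit (fun S T : Finset Ω => ∃ h : G', h • S = T) P (fun S => b ∈ S)
    (fun S T hST => by
      obtain ⟨h, rfl⟩ := hST
      exact ((mem_smul_iff_of_fixed (hbfix h) S)).symm)

/-- Shift: orbits of (k+1)-sets containing fixed b ↔ orbits of k-sets avoiding b. -/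
lemma numOrbits_shift (G' : Type*) [Group G'] [MulAction G' Ω] (b : Ω)
    (hbfix : ∀ h : G', h • b = b) (k : ℕ) :
    numOrbits G' (fun S : Finset Ω => S.card = k + 1 ∧ b ∈ S)
      = numOrbits G' (fun S : Finset Ω => S.card = k ∧ b ∉ S) := by
  unfold numOrbits
  apply Nat.card_congr
  refine Quot.congr (ra := fun S T : {S : Finset Ω // S.card = k + 1 ∧ b ∈ S} => ∃ h : G', h • S.val = T.val)
    (rb := fun S T : {S : Finset Ω // S.card = k ∧ b ∉ S} => ∃ h : G', h • S.val = T.val)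
    { toFun := fun S => ⟨S.1.erase b, by
        rw [Finset.card_erase_of_mem S.2.2, S.2.1]; rfl, Finset.notMem_erase b _⟩
      invFun := fun T => ⟨insert b T.1, by
        rw [Finset.card_insert_of_notMem T.2.2, T.2.1], Finset.mem_insert_self _ _⟩
      left_inv := fun S => by
        ext1; exact Finset.insert_erase S.2.2
      right_inv := fun T => by
        ext1; exact Finset.erase_insert T.2.2 } ?_
  intro S T
  constructor
  · rintro ⟨h, hST⟩
    exact ⟨h, by simp only [Equiv.coe_fn_mk]; rw [smul_erase, hST, hbfix h]⟩
  · rintro ⟨h, hST⟩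
    refine ⟨h, ?_⟩
    simp only [Equiv.coe_fn_mk] at hST
    have : h • S.1 = h • insert b (S.1.erase b) := by rw [Finset.insert_erase S.2.2]
    rw [this, smul_insert, hbfix h, hST, Finset.insert_erase T.2.2]

end NumOrbits

section One
variable {G' Ω : Type*} [Group G'] [DecidableEq Ω] [MulAction G' Ω] [Finite Ω]

lemma rel_equivalence (P : Finset Ω → Prop) :
    Equivalence (fun S T : {S : Finset Ω // P S} => ∃ h : G', h • S.val = T.val) := by
  constructor
  · intro S; exact ⟨1, one_smul _ _⟩
  · rintro S T ⟨h, hh⟩; exact ⟨h⁻¹, by rw [← hh, inv_smul_smul]⟩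
  · rintro S T U ⟨h, hh⟩ ⟨g, hg⟩; exact ⟨g * h, by rw [mul_smul, hh, hg]⟩

lemma numOrbits_eq_one (P : Finset Ω → Prop) (h1 : ∃ S, P S)
    (h2 : ∀ S T : Finset Ω, P S → P T → ∃ h : G', h • S = T) : numOrbits G' P = 1 := by
  unfold numOrbits
  rw [Nat.card_eq_one_iff_unique]
  constructor
  · constructor
    intro x y
    induction x using Quot.ind with | _ x =>
    induction y using Quot.ind with | _ y =>
    exact Quot.sound (h2 x.1 y.1 x.2 y.2)
  · obtain ⟨S, hS⟩ := h1
    exact ⟨Quot.mk _ ⟨S, hS⟩⟩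

lemma exists_smul_eq_of_numOrbits_eq_one (P : Finset Ω → Prop)
    (h : numOrbits G' P = 1) (S T : Finset Ω) (hS : P S) (hT : P T) :
    ∃ h : G', h • S = T := by
  unfold numOrbits at h
  rw [Nat.card_eq_one_iff_unique] at h
  haveI := h.1
  have heq : Quot.mk (fun S T : {S : Finset Ω // P S} => ∃ h : G', h • S.val = T.val) ⟨S, hS⟩
      = Quot.mk _ ⟨T, hT⟩ := Subsingleton.elim _ _
  rw [Quot.eq] at heq
  have := ((rel_equivalence (G' := G') P).eqvGen_iff).mp heq
  exact this

end One

lemma pair_sub_triple {α : Type*} [DecidableEq α] {x z u : α} {e : Finset α}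
    (he : e ⊆ {x, z, u}) (hc : e.card = 2) : e = {x, z} ∨ e = {x, u} ∨ e = {z, u} := by
  obtain ⟨s, t, hst, rfl⟩ := Finset.card_eq_two.mp hc
  have hs : s ∈ ({x, z, u} : Finset α) := he (by simp)
  have ht : t ∈ ({x, z, u} : Finset α) := he (by simp)
  simp only [Finset.mem_insert, Finset.mem_singleton] at hs ht
  rcases hs with rfl | rfl | rfl <;> rcases ht with rfl | rfl | rfl
  · exact absurd rfl hst
  · exact Or.inl rfl
  · exact Or.inr (Or.inl rfl)
  · exact Or.inl (Finset.pair_comm _ _)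
  · exact absurd rfl hst
  · exact Or.inr (Or.inr rfl)
  · exact Or.inr (Or.inl (Finset.pair_comm _ _))
  · exact Or.inr (Or.inr (Finset.pair_comm _ _))
  · exact absurd rfl hst

section PairTrans
variable {n : ℕ}

lemma pair_trans' (hn : 8 ≤ n) (H : Subgroup (Equiv.Perm (Fin n))) (b : Fin n)
    (hbfix : ∀ h : H, h • b = b)
    (h3 : ∀ S T : Finset (Fin n), S.card = 3 → T.card = 3 → b ∉ S → b ∉ T →
      ∃ h : H, h • S = T) :
    ∀ P Q : Finset (Fin n), P.card = 2 → Q.card = 2 → b ∉ P → b ∉ Q →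
      ∃ h : H, h • P = Q := by
  classical
  intro P Q hP2 hQ2 hPb hQb
  by_contra hPQ
  set Red : Finset (Fin n) → Prop := fun e => ∃ h : H, h • P = e with hRed_def
  have hRedP : Red P := ⟨1, one_smul _ _⟩
  have hRedQ : ¬ Red Q := hPQ
  have hRedCard : ∀ {e}, Red e → e.card = 2 := by
    rintro e ⟨h, rfl⟩; rw [Finset.card_smul_finset]; exact hP2
  have hRedb : ∀ {e}, Red e → b ∉ e := by
    rintro e ⟨h, rfl⟩
    rw [mem_smul_iff_of_fixed (hbfix h)]
    exact hPb
  have hRedSmul : ∀ (h : H) (e : Finset (Fin n)), Red (h • e) ↔ Red e := by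
    intro h e
    constructor
    · rintro ⟨g, hg⟩
      exact ⟨h⁻¹ * g, by rw [mul_smul, hg, inv_smul_smul]⟩
    · rintro ⟨g, rfl⟩
      exact ⟨h * g, mul_smul h g P⟩
  set f : Finset (Fin n) → ℕ := fun S => ((S.powersetCard 2).filter Red).card with hf_def
  have hfsmul : ∀ (h : H) (S : Finset (Fin n)), f (h • S) = f S := by
    intro h S
    have himg : (Finset.powersetCard 2 (h • S)).filter Red
        = ((Finset.powersetCard 2 S).filter Red).image (fun e => h • e) := by
      ext e
      simp only [Finset.mem_filter, Finset.mem_powersetCard, Finset.mem_image]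
      constructor
      · rintro ⟨⟨hsub, hcard⟩, hred⟩
        refine ⟨h⁻¹ • e, ⟨⟨?_, ?_⟩, ?_⟩, smul_inv_smul _ _⟩
        · have := Finset.smul_finset_subset_smul_finset (a := h⁻¹) hsub
          rwa [inv_smul_smul] at this
        · rw [Finset.card_smul_finset]; exact hcard
        · exact (hRedSmul h⁻¹ e).mpr hred
      · rintro ⟨e', ⟨⟨hsub, hcard⟩, hred⟩, rfl⟩
        exact ⟨⟨Finset.smul_finset_subset_smul_finset hsub,
          by rw [Finset.card_smul_finset]; exact hcard⟩, (hRedSmul h e').mpr hred⟩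
    show ((Finset.powersetCard 2 (h • S)).filter Red).card = _
    rw [himg, Finset.card_image_of_injective _ (MulAction.injective h)]
  have hfconst : ∀ S T : Finset (Fin n), S.card = 3 → T.card = 3 → b ∉ S → b ∉ T →
      f S = f T := by
    intro S T hS hT hSb hTb
    obtain ⟨h, hh⟩ := h3 S T hS hT hSb hTb
    rw [← hh, hfsmul]
  -- counting helpers
  have hfge1 : ∀ {e S : Finset (Fin n)}, Red e → e ⊆ S → 1 ≤ f S := by
    intro e S hre hes
    apply Finset.card_pos.mpr
    exact ⟨e, Finset.mem_filter.mpr ⟨Finset.mem_powersetCard.mpr ⟨hes, hRedCard hre⟩, hre⟩⟩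
  have hpcs3 : ∀ {S : Finset (Fin n)}, S.card = 3 → (S.powersetCard 2).card = 3 := by
    intro S hS
    rw [Finset.card_powersetCard, hS]
    decide
  have hfle2 : ∀ {e S : Finset (Fin n)}, ¬ Red e → e.card = 2 → e ⊆ S → S.card = 3 →
      f S ≤ 2 := by
    intro e S hre he2 hes hS3
    have hlt : f S < 3 := by
      rw [← hpcs3 hS3]
      apply Finset.card_lt_card
      rw [Finset.ssubset_iff_of_subset (Finset.filter_subset _ _)]
      exact ⟨e, Finset.mem_powersetCard.mpr ⟨hes, he2⟩, by
        simp only [Finset.mem_filter]; tauto⟩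
    omega
  have hfle1 : ∀ {e1 e2 S : Finset (Fin n)}, e1 ≠ e2 → ¬ Red e1 → ¬ Red e2 →
      e1.card = 2 → e2.card = 2 → e1 ⊆ S → e2 ⊆ S → S.card = 3 → f S ≤ 1 := by
    intro e1 e2 S hne hr1 hr2 hc1 hc2 hs1 hs2 hS3
    have hsub : (S.powersetCard 2).filter Red ⊆ S.powersetCard 2 \ {e1, e2} := by
      intro e he
      rw [Finset.mem_filter] at he
      rw [Finset.mem_sdiff]
      refine ⟨he.1, ?_⟩
      simp only [Finset.mem_insert, Finset.mem_singleton]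
      rintro (rfl | rfl)
      · exact hr1 he.2
      · exact hr2 he.2
    calc f S ≤ (S.powersetCard 2 \ {e1, e2}).card := Finset.card_le_card hsub
    _ ≤ 1 := by
        rw [Finset.card_sdiff_of_subset (by
          intro e he
          simp only [Finset.mem_insert, Finset.mem_singleton] at he
          rcases he with rfl | rfl
          · exact Finset.mem_powersetCard.mpr ⟨hs1, hc1⟩
          · exact Finset.mem_powersetCard.mpr ⟨hs2, hc2⟩)]
        rw [hpcs3 hS3, Finset.card_pair hne]
  have hf0 : ∀ {x z u : Fin n}, x ≠ z → x ≠ u → z ≠ u →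
      ¬ Red {x, z} → ¬ Red {x, u} → ¬ Red {z, u} → f {x, z, u} = 0 := by
    intro x z u hxz hxu hzu h1 h2 h3'
    apply Finset.card_eq_zero.mpr
    rw [Finset.filter_eq_empty_iff]
    intro e he
    rw [Finset.mem_powersetCard] at he
    rcases pair_sub_triple he.1 he.2 with rfl | rfl | rfl <;> assumption
  have hf3 : ∀ {x z u : Fin n}, x ≠ z → x ≠ u → z ≠ u →
      Red {x, z} → Red {x, u} → Red {z, u} → f {x, z, u} = 3 := by
    intro x z u hxz hxu hzu h1 h2 h3'
    have hcard3 : ({x, z, u} : Finset (Fin n)).card = 3 := by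
      rw [Finset.card_insert_of_notMem (by simp [hxz, hxu]),
        Finset.card_insert_of_notMem (by simp [hzu]), Finset.card_singleton]
    show ((Finset.powersetCard 2 {x, z, u}).filter Red).card = 3
    rw [Finset.filter_true_of_mem, hpcs3 hcard3]
    intro e he
    rw [Finset.mem_powersetCard] at he
    rcases pair_sub_triple he.1 he.2 with rfl | rfl | rfl <;> assumption
  -- decompose P and Q
  obtain ⟨x, y, hxy, rfl⟩ := Finset.card_eq_two.mp hP2
  obtain ⟨p, q, hpq, rfl⟩ := Finset.card_eq_two.mp hQ2
  -- choose extra points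
  have hpick : ∀ B : Finset (Fin n), B.card ≤ 7 → ∃ z : Fin n, z ∉ B := by
    intro B hB
    have : (Bᶜ : Finset (Fin n)).Nonempty := by
      apply Finset.card_pos.mp
      rw [Finset.card_compl, Fintype.card_fin]
      omega
    obtain ⟨z, hz⟩ := this
    exact ⟨z, Finset.mem_compl.mp hz⟩
  obtain ⟨z0, hz0⟩ := hpick (insert b {x, y}) (by
    apply le_trans (Finset.card_insert_le _ _); simp [Finset.card_pair hxy])
  simp only [Finset.mem_insert, Finset.mem_singleton, not_or] at hz0
  obtain ⟨hz0b, hz0x, hz0y⟩ := hz0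
  obtain ⟨w0, hw0⟩ := hpick (insert b {p, q}) (by
    apply le_trans (Finset.card_insert_le _ _); simp [Finset.card_pair hpq])
  simp only [Finset.mem_insert, Finset.mem_singleton, not_or] at hw0
  obtain ⟨hw0b, hw0p, hw0q⟩ := hw0
  have hbx : b ≠ x := fun h => hPb (by simp [h])
  have hby : b ≠ y := fun h => hPb (by simp [h])
  have hbp : b ≠ p := fun h => hQb (by simp [h])
  have hbq : b ≠ q := fun h => hQb (by simp [h])
  -- the two reference triangles
  have hTPcard : ({x, y, z0} : Finset (Fin n)).card = 3 := by
    rw [Finset.card_insert_of_notMem (by simp [hxy, Ne.symm hz0x]),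
      Finset.card_insert_of_notMem (by simp [Ne.symm hz0y]), Finset.card_singleton]
  have hTPb : b ∉ ({x, y, z0} : Finset (Fin n)) := by simp [hbx, hby, Ne.symm hz0b]
  have hTQcard : ({p, q, w0} : Finset (Fin n)).card = 3 := by
    rw [Finset.card_insert_of_notMem (by simp [hpq, Ne.symm hw0p]),
      Finset.card_insert_of_notMem (by simp [Ne.symm hw0q]), Finset.card_singleton]
  have hTQb : b ∉ ({p, q, w0} : Finset (Fin n)) := by simp [hbp, hbq, Ne.symm hw0b]
  have hfTP1 : 1 ≤ f {x, y, z0} := hfge1 hRedP (by intro t ht; simp at ht; rcases ht with rfl | rfl <;> simp)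
  have hfTQ2 : f {p, q, w0} ≤ 2 := hfle2 hRedQ (Finset.card_pair hpq)
    (by intro t ht; simp at ht; rcases ht with rfl | rfl <;> simp) hTQcard
  have hceq : f {x, y, z0} = f {p, q, w0} := hfconst _ _ hTPcard hTQcard hTPb hTQb
  have hc12 : f {x, y, z0} = 1 ∨ f {x, y, z0} = 2 := by omega
  rcases hc12 with hc1 | hc2
  · -- red pairs form a matching
    have hM : ∀ e1 e2 : Finset (Fin n), Red e1 → Red e2 → ∀ v, v ∈ e1 → v ∈ e2 → e1 = e2 := by
      intro e1 e2 hr1 hr2 v hv1 hv2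
      by_contra hne
      have hi1 : ({v} : Finset (Fin n)) ⊆ e1 ∩ e2 := by simp [hv1, hv2]
      have hile : (e1 ∩ e2).card ≤ 2 := by
        rw [← hRedCard hr1]; exact Finset.card_le_card (Finset.inter_subset_left)
      have hige : 1 ≤ (e1 ∩ e2).card := by
        calc 1 = ({v} : Finset (Fin n)).card := (Finset.card_singleton v).symm
        _ ≤ _ := Finset.card_le_card hi1
      have hine2 : (e1 ∩ e2).card ≠ 2 := by
        intro h2
        have h1 : e1 ∩ e2 = e1 := Finset.eq_of_subset_of_card_le Finset.inter_subset_left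
          (by rw [hRedCard hr1, h2]) |>.symm ▸ rfl
        have he1 : e1 ∩ e2 = e1 := Finset.eq_of_subset_of_card_le Finset.inter_subset_left
          (by rw [hRedCard hr1, h2])
        have he2 : e1 ∩ e2 = e2 := Finset.eq_of_subset_of_card_le Finset.inter_subset_right
          (by rw [hRedCard hr2, h2])
        exact hne (he1 ▸ he2)
      have hicard : (e1 ∩ e2).card = 1 := by omega
      have hucard : (e1 ∪ e2).card = 3 := by
        have := Finset.card_union_add_card_inter e1 e2
        rw [hicard, hRedCard hr1, hRedCard hr2] at this
        omega
      have hub : b ∉ e1 ∪ e2 := by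
        rw [Finset.mem_union]
        rintro (h | h)
        · exact hRedb hr1 h
        · exact hRedb hr2 h
      have hf2 : 2 ≤ f (e1 ∪ e2) := by
        apply Finset.one_lt_card.mpr
        refine ⟨e1, ?_, e2, ?_, hne⟩
        · exact Finset.mem_filter.mpr ⟨Finset.mem_powersetCard.mpr
            ⟨Finset.subset_union_left, hRedCard hr1⟩, hr1⟩
        · exact Finset.mem_filter.mpr ⟨Finset.mem_powersetCard.mpr
            ⟨Finset.subset_union_right, hRedCard hr2⟩, hr2⟩
      have := hfconst _ _ hucard hTPcard hub hTPb
      omega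
    -- build an all-blue triangle
    have hnotred_x : ∀ {v : Fin n}, v ∉ ({x, y} : Finset (Fin n)) → ¬ Red {x, v} := by
      intro v hv hr
      have : ({x, v} : Finset (Fin n)) = {x, y} := hM _ _ hr hRedP x (by simp) (by simp)
      have : v ∈ ({x, y} : Finset (Fin n)) := this ▸ (by simp : v ∈ ({x, v} : Finset (Fin n)))
      exact hv this
    obtain ⟨u, hu⟩ : ∃ u : Fin n, u ∉ insert b (insert z0 ({x, y} : Finset (Fin n))) ∧
        ¬ Red {z0, u} := by
      by_contra hcon
      push_neg at hcon
      obtain ⟨u1, hu1⟩ := hpick (insert b (insert z0 {x, y})) (by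
        apply le_trans (Finset.card_insert_le _ _)
        apply Nat.succ_le_succ
        apply le_trans (Finset.card_insert_le _ _)
        simp [Finset.card_pair hxy])
      obtain ⟨u2, hu2'⟩ := hpick (insert u1 (insert b (insert z0 {x, y}))) (by
        apply le_trans (Finset.card_insert_le _ _)
        apply Nat.succ_le_succ
        apply le_trans (Finset.card_insert_le _ _)
        apply Nat.succ_le_succ
        apply le_trans (Finset.card_insert_le _ _)
        simp [Finset.card_pair hxy])
      have hu2 : u2 ∉ insert b (insert z0 ({x, y} : Finset (Fin n))) := by
        intro h; exact hu2' (Finset.mem_insert_of_mem h)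
      have hne12 : u1 ≠ u2 := by
        intro h; exact hu2' (h ▸ Finset.mem_insert_self _ _)
      have hr1 := hcon u1 hu1
      have hr2 := hcon u2 hu2
      have := hM _ _ hr1 hr2 z0 (by simp) (by simp)
      have hmem : u1 ∈ ({z0, u2} : Finset (Fin n)) := this ▸ (by simp : u1 ∈ ({z0, u1} : Finset (Fin n)))
      simp only [Finset.mem_insert, Finset.mem_singleton] at hmem
      rcases hmem with rfl | rfl
      · exact hu1 (by simp)
      · exact hne12 rfl
    obtain ⟨humem, hured⟩ := hu
    simp only [Finset.mem_insert, Finset.mem_singleton, not_or] at humem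
    obtain ⟨hub, huz0, hux, huy⟩ := humem
    have hxz0 : ¬ Red {x, z0} := hnotred_x (by simp [hz0x, hz0y])
    have hxu : ¬ Red {x, u} := hnotred_x (by simp [hux, huy])
    have hf0' : f {x, z0, u} = 0 := hf0 (Ne.symm hz0x) (Ne.symm hux) (Ne.symm huz0) hxz0 hxu hured
    have hcard : ({x, z0, u} : Finset (Fin n)).card = 3 := by
      rw [Finset.card_insert_of_notMem (by simp [Ne.symm hz0x, Ne.symm hux]),
        Finset.card_insert_of_notMem (by simp [Ne.symm huz0]), Finset.card_singleton]
    have hbmem : b ∉ ({x, z0, u} : Finset (Fin n)) := by simp [hbx, Ne.symm hz0b, Ne.symm hub]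
    have := hfconst _ _ hcard hTPcard hbmem hTPb
    omega
  · -- blue pairs form a matching
    have hMb : ∀ e1 e2 : Finset (Fin n), ¬ Red e1 → ¬ Red e2 → e1.card = 2 → e2.card = 2 →
        b ∉ e1 → b ∉ e2 → ∀ v, v ∈ e1 → v ∈ e2 → e1 = e2 := by
      intro e1 e2 hr1 hr2 hc1' hc2' hb1 hb2 v hv1 hv2
      by_contra hne
      have hi1 : ({v} : Finset (Fin n)) ⊆ e1 ∩ e2 := by simp [hv1, hv2]
      have hile : (e1 ∩ e2).card ≤ 2 := by
        rw [← hc1']; exact Finset.card_le_card (Finset.inter_subset_left)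
      have hige : 1 ≤ (e1 ∩ e2).card := by
        calc 1 = ({v} : Finset (Fin n)).card := (Finset.card_singleton v).symm
        _ ≤ _ := Finset.card_le_card hi1
      have hine2 : (e1 ∩ e2).card ≠ 2 := by
        intro h2
        have he1 : e1 ∩ e2 = e1 := Finset.eq_of_subset_of_card_le Finset.inter_subset_left
          (by rw [hc1', h2])
        have he2 : e1 ∩ e2 = e2 := Finset.eq_of_subset_of_card_le Finset.inter_subset_right
          (by rw [hc2', h2])
        exact hne (he1 ▸ he2)
      have hicard : (e1 ∩ e2).card = 1 := by omega
      have hucard : (e1 ∪ e2).card = 3 := by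
        have := Finset.card_union_add_card_inter e1 e2
        rw [hicard, hc1', hc2'] at this
        omega
      have hub : b ∉ e1 ∪ e2 := by
        rw [Finset.mem_union]; rintro (h | h)
        · exact hb1 h
        · exact hb2 h
      have hf1 : f (e1 ∪ e2) ≤ 1 := hfle1 hne hr1 hr2 hc1' hc2'
        Finset.subset_union_left Finset.subset_union_right hucard
      have := hfconst _ _ hucard hTPcard hub hTPb
      omega
    -- build an all-red triangle based at Q = {p, q}
    have hred_p : ∀ {v : Fin n}, v ∉ ({p, q} : Finset (Fin n)) → v ≠ b → Red {p, v} := by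
      intro v hv hvb
      by_contra hr
      have hpv : p ≠ v := fun h => hv (by simp [← h])
      have : ({p, v} : Finset (Fin n)) = {p, q} := hMb _ _ hr hRedQ (Finset.card_pair hpv)
        (Finset.card_pair hpq) (by simp [hbp, Ne.symm hvb]) (by simp [hbp, hbq]) p (by simp) (by simp)
      have : v ∈ ({p, q} : Finset (Fin n)) := this ▸ (by simp : v ∈ ({p, v} : Finset (Fin n)))
      exact hv this
    obtain ⟨w, hw⟩ : ∃ w : Fin n, w ∉ insert b (insert w0 ({p, q} : Finset (Fin n))) ∧
        Red {w0, w} := by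
      by_contra hcon
      push_neg at hcon
      obtain ⟨w1, hw1⟩ := hpick (insert b (insert w0 {p, q})) (by
        apply le_trans (Finset.card_insert_le _ _)
        apply Nat.succ_le_succ
        apply le_trans (Finset.card_insert_le _ _)
        simp [Finset.card_pair hpq])
      obtain ⟨w2, hw2'⟩ := hpick (insert w1 (insert b (insert w0 {p, q}))) (by
        apply le_trans (Finset.card_insert_le _ _)
        apply Nat.succ_le_succ
        apply le_trans (Finset.card_insert_le _ _)
        apply Nat.succ_le_succ
        apply le_trans (Finset.card_insert_le _ _)
        simp [Finset.card_pair hpq])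
      have hw2 : w2 ∉ insert b (insert w0 ({p, q} : Finset (Fin n))) := by
        intro h; exact hw2' (Finset.mem_insert_of_mem h)
      have hne12 : w1 ≠ w2 := fun h => hw2' (h ▸ Finset.mem_insert_self _ _)
      simp only [Finset.mem_insert, Finset.mem_singleton, not_or] at hw1 hw2
      have hr1 := hcon w1 (by simp only [Finset.mem_insert, Finset.mem_singleton, not_or]; exact hw1)
      have hr2 := hcon w2 (by simp only [Finset.mem_insert, Finset.mem_singleton, not_or]; exact hw2)
      have := hMb _ _ hr1 hr2 (Finset.card_pair (Ne.symm hw1.2.1)) (Finset.card_pair (Ne.symm hw2.2.1))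
        (by simp [Ne.symm hw0b, Ne.symm hw1.1]) (by simp [Ne.symm hw0b, Ne.symm hw2.1]) w0 (by simp) (by simp)
      have hmem : w1 ∈ ({w0, w2} : Finset (Fin n)) := this ▸ (by simp : w1 ∈ ({w0, w1} : Finset (Fin n)))
      simp only [Finset.mem_insert, Finset.mem_singleton] at hmem
      rcases hmem with rfl | rfl
      · exact hw1.2.1 rfl
      · exact hne12 rfl
    obtain ⟨hwmem, hwred⟩ := hw
    simp only [Finset.mem_insert, Finset.mem_singleton, not_or] at hwmem
    obtain ⟨hwb, hww0, hwp, hwq⟩ := hwmem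
    have hpw0red : Red {p, w0} := hred_p (by simp [hw0p, hw0q]) hw0b
    have hpwred : Red {p, w} := hred_p (by simp [hwp, hwq]) hwb
    have hf3' : f {p, w0, w} = 3 := hf3 (Ne.symm hw0p) (Ne.symm hwp) (Ne.symm hww0)
      hpw0red hpwred hwred
    have hcard : ({p, w0, w} : Finset (Fin n)).card = 3 := by
      rw [Finset.card_insert_of_notMem (by simp [Ne.symm hw0p, Ne.symm hwp]),
        Finset.card_insert_of_notMem (by simp [Ne.symm hww0]), Finset.card_singleton]
    have hbmem : b ∉ ({p, w0, w} : Finset (Fin n)) := by simp [hbp, Ne.symm hw0b, Ne.symm hwb]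
    have := hfconst _ _ hcard hTPcard hbmem hTPb
    omega

end PairTrans

lemma mcount {γ : Type*} [DecidableEq γ] (a x y z : γ) :
    Multiset.count a ({x, y, z} : Multiset γ)
      = (if a = x then 1 else 0) + ((if a = y then 1 else 0) + (if a = z then 1 else 0)) := by
  simp only [Multiset.insert_eq_cons, Multiset.count_cons, Multiset.count_singleton]
  split_ifs <;> omega

section PT
variable {n : ℕ}

lemma point_trans (hn : 8 ≤ n) (H : Subgroup (Equiv.Perm (Fin n))) (b : Fin n)
    (hbfix : ∀ h : H, h • b = b)
    (hnofix : ∀ x : Fin n, x ≠ b → ∃ h : H, h • x ≠ x)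
    (ha : numOrbits H (fun S : Finset (Fin n) => S.card = 3 ∧ b ∉ S)
        = numOrbits H (fun S : Finset (Fin n) => S.card = 1 ∧ b ∉ S)) :
    ∀ x y : Fin n, x ≠ b → y ≠ b → ∃ h : H, h • x = y := by
  classical
  by_contra hcon
  push_neg at hcon
  obtain ⟨p, q, hp, hq, hpq⟩ := hcon
  set relP : Fin n → Fin n → Prop := fun x y => ∃ h : H, h • x = y with hrelP_def
  have hrelEquiv : Equivalence relP := by
    constructor
    · intro x; exact ⟨1, one_smul _ _⟩
    · rintro x y ⟨h, hh⟩; exact ⟨h⁻¹, by rw [← hh, inv_smul_smul]⟩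
    · rintro x y z ⟨h, hh⟩ ⟨g, hg⟩; exact ⟨g * h, by rw [mul_smul, hh, hg]⟩
  set mkp : Fin n → Quot relP := Quot.mk relP with hmkp_def
  have hmk_iff : ∀ x y : Fin n, mkp x = mkp y ↔ relP x y := by
    intro x y
    constructor
    · intro h
      exact (hrelEquiv.eqvGen_iff).mp (Quot.eq.mp h)
    · exact Quot.sound
  set cp : Quot relP := mkp p with hcp_def
  set cq : Quot relP := mkp q with hcq_def
  have hcpq : cp ≠ cq := by
    intro h
    obtain ⟨g, hg⟩ := (hmk_iff p q).mp h
    exact hpq g hg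
  -- second point in an orbit
  have horb2 : ∀ x : Fin n, x ≠ b → ∃ x' : Fin n, relP x x' ∧ x' ≠ x ∧ x' ≠ b := by
    intro x hx
    obtain ⟨h, hh⟩ := hnofix x hx
    refine ⟨h • x, ⟨h, rfl⟩, hh, ?_⟩
    intro hb'
    have : x = b := by
      have := congrArg (fun z => h⁻¹ • z) hb'
      simpa [inv_smul_smul, hbfix h⁻¹] using this
    exact hx this
  -- the type function
  set τfun : Finset (Fin n) → Multiset (Quot relP) := fun S => S.val.map mkp with hτ_def
  have hτsmul : ∀ (h : H) (S : Finset (Fin n)), τfun (h • S) = τfun S := by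
    intro h S
    have hval : (h • S).val = S.val.map (fun x => h • x) := by
      rw [Finset.smul_finset_def, Finset.image_val,
        Multiset.dedup_eq_self.mpr (S.nodup.map (MulAction.injective h))]
    rw [hτ_def]
    simp only [hval, Multiset.map_map]
    apply Multiset.map_congr rfl
    intro x _
    exact ((hmk_iff (h • x) x).mpr ⟨h⁻¹, inv_smul_smul _ _⟩)
  -- τ on triangles with explicit elements
  have hτtriple : ∀ x y z : Fin n, x ≠ y → x ≠ z → y ≠ z →
      τfun {x, y, z} = {mkp x, mkp y, mkp z} := by
    intro x y z hxy hxz hyz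
    have h1 : (({x, y, z} : Finset (Fin n))).val = x ::ₘ y ::ₘ {z} := by
      rw [Finset.insert_val_of_notMem (by simp [hxy, hxz]),
        Finset.insert_val_of_notMem (by simp [hyz])]
      rfl
    show Multiset.map mkp (({x, y, z} : Finset (Fin n))).val = _
    rw [h1]
    simp [Multiset.insert_eq_cons]
  -- the quotient of 3-sets
  set r3 : {S : Finset (Fin n) // S.card = 3 ∧ b ∉ S} →
      {S : Finset (Fin n) // S.card = 3 ∧ b ∉ S} → Prop :=
    fun S T => ∃ h : H, h • S.val = T.val with hr3_def
  set τbar : Quot r3 → Multiset (Quot relP) :=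
    Quot.lift (fun S => τfun S.1) (by
      rintro S T ⟨h, hh⟩
      show τfun S.1 = τfun T.1
      rw [← hh, hτsmul]) with hτbar_def
  -- realizability of triples
  have hreal3 : ∀ x y z : Fin n, x ≠ y → x ≠ z → y ≠ z → x ≠ b → y ≠ b → z ≠ b →
      ∃ t : Quot r3, τbar t = {mkp x, mkp y, mkp z} := by
    intro x y z hxy hxz hyz hxb hyb hzb
    have hcard : ({x, y, z} : Finset (Fin n)).card = 3 := by
      rw [Finset.card_insert_of_notMem (by simp [hxy, hxz]),
        Finset.card_insert_of_notMem (by simp [hyz]), Finset.card_singleton]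
    have hbmem : b ∉ ({x, y, z} : Finset (Fin n)) := by
      simp [Ne.symm hxb, Ne.symm hyb, Ne.symm hzb]
    exact ⟨Quot.mk r3 ⟨{x, y, z}, hcard, hbmem⟩, hτtriple x y z hxy hxz hyz⟩
  -- the map φ on points
  set φ : {x : Fin n // x ≠ b} → Multiset (Quot relP) :=
    fun x => if mkp x.1 = cq then {cq, cq, cp} else {mkp x.1, mkp x.1, cq} with hφ_def
  set rA : {x : Fin n // x ≠ b} → {x : Fin n // x ≠ b} → Prop :=
    fun x y => ∃ h : H, h • x.1 = y.1 with hrA_def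
  have hφwd : ∀ x y, rA x y → φ x = φ y := by
    rintro x y ⟨h, hh⟩
    have : mkp x.1 = mkp y.1 := (hmk_iff _ _).mpr ⟨h, hh⟩
    rw [hφ_def]
    simp only [this]
  set φbar : Quot rA → Multiset (Quot relP) := Quot.lift φ hφwd with hφbar_def
  -- injectivity of φbar
  have hφinj : Function.Injective φbar := by
    intro s t
    induction s using Quot.ind with | _ x =>
    induction t using Quot.ind with | _ y =>
    intro hxy
    have hxy' : φ x = φ y := hxy
    apply Quot.sound
    show rA x y
    rw [hrA_def]
    by_cases hx : mkp x.1 = cq <;> by_cases hy : mkp y.1 = cq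
    · exact (hmk_iff _ _).mp (hx.trans hy.symm)
    · exfalso
      rw [hφ_def] at hxy'
      simp only [if_pos hx, if_neg hy] at hxy'
      have hcnt := congrArg (Multiset.count cq) hxy'
      rw [mcount, mcount] at hcnt
      simp [Ne.symm hcpq, Ne.symm hy] at hcnt
    · exfalso
      rw [hφ_def] at hxy'
      simp only [if_pos hy, if_neg hx] at hxy'
      have hcnt := congrArg (Multiset.count cq) hxy'
      rw [mcount, mcount] at hcnt
      simp [Ne.symm hcpq, Ne.symm hx] at hcnt
    · rw [hφ_def] at hxy'
      simp only [if_neg hx, if_neg hy] at hxy'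
      have hmem : mkp x.1 ∈ ({mkp y.1, mkp y.1, cq} : Multiset (Quot relP)) := by
        rw [← hxy']
        simp
      simp only [Multiset.insert_eq_cons, Multiset.mem_cons, Multiset.mem_singleton] at hmem
      rcases hmem with h | h | h
      · exact (hmk_iff _ _).mp h
      · exact (hmk_iff _ _).mp h
      · exact absurd h hx
  -- every value of φ is realizable as τbar of some 3-set orbit
  have hφreal : ∀ s : Quot rA, ∃ t : Quot r3, τbar t = φbar s := by
    intro s
    induction s using Quot.ind with | _ x =>
    show ∃ t : Quot r3, τbar t = φ x
    by_cases hx : mkp x.1 = cq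
    · rw [hφ_def]
      simp only [if_pos hx]
      obtain ⟨q', hqq', hq'q, hq'b⟩ := horb2 q hq
      have hq'c : mkp q' = cq := ((hmk_iff q q').mpr hqq').symm
      have hpq' : q' ≠ p := by
        intro h
        rw [h] at hq'c
        exact hcpq hq'c
      have hqp : q ≠ p := by
        intro h
        exact hcpq (by rw [hcp_def, hcq_def, h])
      obtain ⟨t, ht⟩ := hreal3 q q' p (Ne.symm hq'q) hqp hpq' hq hq'b hp
      refine ⟨t, ?_⟩
      rw [ht, hq'c, hcq_def]
    · rw [hφ_def]
      simp only [if_neg hx]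
      obtain ⟨x', hxx', hx'x, hx'b⟩ := horb2 x.1 x.2
      have hx'c : mkp x' = mkp x.1 := ((hmk_iff x.1 x').mpr hxx').symm
      have hqx : q ≠ x.1 := by
        intro h
        exact hx (by rw [← h])
      have hqx' : q ≠ x' := by
        intro h
        rw [← h] at hx'c
        exact hx hx'c.symm
      obtain ⟨t, ht⟩ := hreal3 x.1 x' q (Ne.symm hx'x) (Ne.symm hqx) (Ne.symm hqx') x.2 hx'b hq
      refine ⟨t, ?_⟩
      rw [ht, hx'c, hcq_def]
  -- find an extra realizable multiset not in the range of φbar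
  have hextra : ∃ m : Multiset (Quot relP), (∃ t : Quot r3, τbar t = m) ∧
      ∀ s : Quot rA, φbar s ≠ m := by
    by_cases hthree : ∃ x y z : Fin n, x ≠ b ∧ y ≠ b ∧ z ≠ b ∧ x ≠ y ∧ x ≠ z ∧ y ≠ z ∧
        mkp x = mkp y ∧ mkp x = mkp z
    · obtain ⟨x, y, z, hxb, hyb, hzb, hxy, hxz, hyz, hmxy, hmxz⟩ := hthree
      refine ⟨{mkp x, mkp x, mkp x}, ?_, ?_⟩
      · obtain ⟨t, ht⟩ := hreal3 x y z hxy hxz hyz hxb hyb hzb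
        exact ⟨t, by rw [ht, ← hmxy, ← hmxz]⟩
      · intro s
        induction s using Quot.ind with | _ w =>
        show φ w ≠ _
        rw [hφ_def]
        by_cases hw : mkp w.1 = cq <;> simp only [if_pos, if_neg, hw]
        · intro hE
          have h1 : cq ∈ ({mkp x, mkp x, mkp x} : Multiset (Quot relP)) := by
            rw [← hE]; simp
          have h2 : cp ∈ ({mkp x, mkp x, mkp x} : Multiset (Quot relP)) := by
            rw [← hE]; simp
          simp only [Multiset.insert_eq_cons, Multiset.mem_cons, Multiset.mem_singleton,
            or_self] at h1 h2
          exact hcpq (h2.trans h1.symm)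
        · intro hE
          have h1 : cq ∈ ({mkp x, mkp x, mkp x} : Multiset (Quot relP)) := by
            rw [← hE]; simp
          have h2 : mkp w.1 ∈ ({mkp x, mkp x, mkp x} : Multiset (Quot relP)) := by
            rw [← hE]; simp
          simp only [Multiset.insert_eq_cons, Multiset.mem_cons, Multiset.mem_singleton,
            or_self] at h1 h2
          exact hw (h2.trans h1.symm)
    · push_neg at hthree
      -- every class among non-b points has at most two elements
      have hclass2 : ∀ c : Quot relP, (Finset.univ.filter
          (fun z : Fin n => z ≠ b ∧ mkp z = c)).card ≤ 2 := by
        intro c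
        by_contra hgt
        push_neg at hgt
        obtain ⟨x, y, z, hx, hy, hz, hxy, hxz, hyz⟩ :=
          Finset.two_lt_card_iff.mp hgt
        simp only [Finset.mem_filter, Finset.mem_univ, true_and] at hx hy hz
        exact (hthree x y z hx.1 hy.1 hz.1 hxy hxz hyz
          (hx.2.trans hy.2.symm)) (hx.2.trans hz.2.symm)
      obtain ⟨r, hr⟩ : ∃ r : Fin n, r ∉ insert b
          ((Finset.univ.filter (fun z : Fin n => z ≠ b ∧ mkp z = cp))
            ∪ (Finset.univ.filter (fun z : Fin n => z ≠ b ∧ mkp z = cq))) := by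
        have hcard : (insert b
            ((Finset.univ.filter (fun z : Fin n => z ≠ b ∧ mkp z = cp))
              ∪ (Finset.univ.filter (fun z : Fin n => z ≠ b ∧ mkp z = cq)))).card ≤ 5 := by
          apply le_trans (Finset.card_insert_le _ _)
          have := Finset.card_union_le
            (Finset.univ.filter (fun z : Fin n => z ≠ b ∧ mkp z = cp))
            (Finset.univ.filter (fun z : Fin n => z ≠ b ∧ mkp z = cq))
          have h1 := hclass2 cp
          have h2 := hclass2 cq
          omega
        have : ((insert b
            ((Finset.univ.filter (fun z : Fin n => z ≠ b ∧ mkp z = cp))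
              ∪ (Finset.univ.filter (fun z : Fin n => z ≠ b ∧ mkp z = cq))))ᶜ
              : Finset (Fin n)).Nonempty := by
          apply Finset.card_pos.mp
          rw [Finset.card_compl, Fintype.card_fin]
          omega
        obtain ⟨r, hr⟩ := this
        exact ⟨r, Finset.mem_compl.mp hr⟩
      simp only [Finset.mem_insert, Finset.mem_union, Finset.mem_filter, Finset.mem_univ,
        true_and, not_or] at hr
      obtain ⟨hrb, hrr⟩ := hr
      have hrp : mkp r ≠ cp := fun h => hrr.1 ⟨hrb, h⟩
      have hrq : mkp r ≠ cq := fun h => hrr.2 ⟨hrb, h⟩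
      have hpq' : p ≠ q := fun h => hcpq (by rw [hcp_def, hcq_def, h])
      have hpr : p ≠ r := fun h => hrp (by rw [← h])
      have hqr : q ≠ r := fun h => hrq (by rw [← h])
      refine ⟨{cp, cq, mkp r}, ?_, ?_⟩
      · obtain ⟨t, ht⟩ := hreal3 p q r hpq' hpr hqr hp hq hrb
        exact ⟨t, ht⟩
      · intro s
        induction s using Quot.ind with | _ w =>
        show φ w ≠ _
        simp only [hφ_def]
        by_cases hw : mkp w.1 = cq
        · rw [if_pos hw]
          intro hE
          have hcnt := congrArg (Multiset.count cq) hE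
          rw [mcount, mcount] at hcnt
          simp [Ne.symm hcpq, Ne.symm hrq] at hcnt
        · rw [if_neg hw]
          intro hE
          have hmem : mkp w.1 ∈ ({cp, cq, mkp r} : Multiset (Quot relP)) := by
            rw [← hE]; simp
          simp only [Multiset.insert_eq_cons, Multiset.mem_cons, Multiset.mem_singleton] at hmem
          rcases hmem with h | h | h
          · rw [h] at hE
            have hcnt := congrArg (Multiset.count cp) hE
            rw [mcount, mcount] at hcnt
            simp [hcpq, Ne.symm hrp] at hcnt
          · exact hw h
          · rw [h] at hE
            have hcnt := congrArg (Multiset.count (mkp r)) hE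
            rw [mcount, mcount] at hcnt
            simp [hrp, hrq] at hcnt
  -- assemble the cardinality contradiction
  obtain ⟨extra, ⟨text, htext⟩, hnotin⟩ := hextra
  have hg : ∀ o : Option (Quot rA), (Option.elim o extra φbar) ∈ Set.range τbar := by
    intro o
    match o with
    | none => exact ⟨text, htext⟩
    | some s =>
      obtain ⟨t, ht⟩ := hφreal s
      exact ⟨t, ht⟩
  set g : Option (Quot rA) → ↥(Set.range τbar) := fun o => ⟨Option.elim o extra φbar, hg o⟩
    with hg_def
  have hginj : Function.Injective g := by
    intro o1 o2 hEq
    have hval : Option.elim o1 extra φbar = Option.elim o2 extra φbar :=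
      congrArg Subtype.val hEq
    match o1, o2 with
    | none, none => rfl
    | none, some s => exact absurd hval.symm (hnotin s)
    | some s, none => exact absurd hval (hnotin s)
    | some s, some t => exact congrArg some (hφinj hval)
  haveI : Finite ↥(Set.range τbar) := Set.Finite.to_subtype (Set.finite_range τbar)
  have c1 : Nat.card (Option (Quot rA)) ≤ Nat.card ↥(Set.range τbar) :=
    Nat.card_le_card_of_injective g hginj
  have c2 : Nat.card ↥(Set.range τbar) ≤ Nat.card (Quot r3) :=
    Nat.card_le_card_of_surjective (fun t => ⟨τbar t, ⟨t, rfl⟩⟩)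
      (by rintro ⟨m, t, rfl⟩; exact ⟨t, rfl⟩)
  have c3 : Nat.card (Option (Quot rA)) = Nat.card (Quot rA) + 1 := by
    rw [Nat.card_congr ((Equiv.optionEquivSumPUnit (Quot rA)) :
      Option (Quot rA) ≃ (Quot rA) ⊕ PUnit.{1}), Nat.card_sum]
    congr 1
    simp [Nat.card_eq_fintype_card]
  have c4 : Nat.card (Quot rA) = numOrbits H (fun S : Finset (Fin n) => S.card = 1 ∧ b ∉ S) := by
    unfold numOrbits
    apply Nat.card_congr
    refine Quot.congr
      { toFun := fun x => ⟨({x.1} : Finset (Fin n)), Finset.card_singleton _, by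
          simp only [Finset.mem_singleton]; exact Ne.symm x.2⟩
        invFun := fun S => ⟨S.1.min' (Finset.card_pos.mp (by rw [S.2.1]; norm_num)), by
          intro h
          have hmem := Finset.min'_mem S.1 (Finset.card_pos.mp (by rw [S.2.1]; norm_num))
          rw [h] at hmem
          exact S.2.2 hmem⟩
        left_inv := fun x => by
          apply Subtype.ext
          simp
        right_inv := fun S => by
          apply Subtype.ext
          obtain ⟨a, ha'⟩ := Finset.card_eq_one.mp S.2.1
          simp only [ha', Finset.min'_singleton] } ?_
    intro x y
    constructor
    · rintro ⟨h, hh⟩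
      exact ⟨h, by
        simp only [Equiv.coe_fn_mk]
        rw [Finset.smul_finset_singleton, hh]⟩
    · rintro ⟨h, hh⟩
      refine ⟨h, ?_⟩
      simp only [Equiv.coe_fn_mk, Finset.smul_finset_singleton] at hh
      exact Finset.singleton_inj.mp hh
  have c5 : Nat.card (Quot r3) = numOrbits H (fun S : Finset (Fin n) => S.card = 3 ∧ b ∉ S) := by
    unfold numOrbits
    rfl
  omega

end PT

/-- If `H ≤ S_n` (`n ≥ 8`) has the last point `b` as its unique fixed point and
`O_2(H) = ⋯ = O_d(H)` for some `3 ≤ d ≤ (n-1)/2`, then `H` acts `d`-homogeneously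
on the remaining `n - 1` points. -/
theorem stmt9 (n d : ℕ) (hn : 8 ≤ n)
    (H : Subgroup (Equiv.Perm (Fin n))) (b : Fin n) (hb : (b : ℕ) = n - 1)
    (hfix : {x : Fin n | ∀ h ∈ H, h x = x} = {b})
    (hd1 : 3 ≤ d) (hd2 : 2 * d ≤ n - 1)
    (hO : ∀ k, 2 ≤ k → k ≤ d →
      numOrbits H (fun S : Finset (Fin n) => S.card = k)
        = numOrbits H (fun S : Finset (Fin n) => S.card = 2)) :
    IsHomogeneousOn H ({b} : Finset (Fin n))ᶜ d := by
  classical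
  have hbfix : ∀ h : H, h • b = b := by
    intro h
    have hbmem : b ∈ {x : Fin n | ∀ h ∈ H, h x = x} := by rw [hfix]; rfl
    exact hbmem h h.2
  have hnofix : ∀ x : Fin n, x ≠ b → ∃ h : H, h • x ≠ x := by
    intro x hx
    have : x ∉ {x : Fin n | ∀ h ∈ H, h x = x} := by
      rw [hfix]; simpa using hx
    simp only [Set.mem_setOf_eq, not_forall] at this
    obtain ⟨g, hg, hgx⟩ := this
    exact ⟨⟨g, hg⟩, hgx⟩
  set a : ℕ → ℕ := fun j => numOrbits H (fun S : Finset (Fin n) => S.card = j ∧ b ∉ S) with ha_def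
  have hdecomp : ∀ k, numOrbits H (fun S : Finset (Fin n) => S.card = k + 1) = a k + a (k + 1) := by
    intro k
    rw [numOrbits_split H b hbfix (fun S => S.card = k + 1), numOrbits_shift H b hbfix k]
  have h2eq : numOrbits H (fun S : Finset (Fin n) => S.card = 2) = a 1 + a 2 := by
    have := hdecomp 1
    norm_num at this ⊢
    exact this
  have hOa : ∀ k, 1 ≤ k → k + 1 ≤ d → a k + a (k + 1) = a 1 + a 2 := by
    intro k hk1 hkd
    have := hO (k + 1) (by omega) hkd
    rw [hdecomp k, h2eq] at this
    exact this
  have ha13 : a 3 = a 1 := by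
    have h1 := hOa 1 le_rfl (by omega)
    have h2 := hOa 2 (by omega) (by omega)
    norm_num at h1 h2
    omega
  have htrans := point_trans hn H b hbfix hnofix (show a 3 = a 1 from ha13)
  -- a 1 = 1
  have hx0 : ∃ x : Fin n, x ≠ b := by
    by_contra hc
    push_neg at hc
    have h0 : (⟨0, by omega⟩ : Fin n) = b := hc _
    have h1 : (⟨1, by omega⟩ : Fin n) = b := hc _
    rw [← h1] at h0
    simp [Fin.mk.injEq] at h0
  have ha1 : a 1 = 1 := by
    apply numOrbits_eq_one
    · obtain ⟨x, hx⟩ := hx0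
      exact ⟨{x}, Finset.card_singleton x, by simpa using Ne.symm hx⟩
    · rintro S T ⟨hS1, hSb⟩ ⟨hT1, hTb⟩
      obtain ⟨x, rfl⟩ := Finset.card_eq_one.mp hS1
      obtain ⟨y, rfl⟩ := Finset.card_eq_one.mp hT1
      obtain ⟨h, hh⟩ := htrans x y (Ne.symm (by simpa using hSb)) (Ne.symm (by simpa using hTb))
      exact ⟨h, by rw [Finset.smul_finset_singleton, hh]⟩
  have ha3 : a 3 = 1 := by omega
  have h3homog : ∀ S T : Finset (Fin n), S.card = 3 → T.card = 3 → b ∉ S → b ∉ T →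
      ∃ h : H, h • S = T := by
    intro S T hS hT hSb hTb
    exact exists_smul_eq_of_numOrbits_eq_one _ ha3 S T ⟨hS, hSb⟩ ⟨hT, hTb⟩
  have hpair := pair_trans' hn H b hbfix h3homog
  have ha2 : a 2 = 1 := by
    apply numOrbits_eq_one
    · obtain ⟨T, hT, hTc⟩ := Finset.exists_subset_card_eq
        (s := ({b} : Finset (Fin n))ᶜ) (n := 2) (by
          rw [Finset.card_compl, Finset.card_singleton, Fintype.card_fin]; omega)
      refine ⟨T, hTc, fun hb' => ?_⟩
      have := hT hb'
      simp at this
    · rintro S T ⟨hS1, hSb⟩ ⟨hT1, hTb⟩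
      exact hpair S T hS1 hT1 hSb hTb
  have hak : ∀ k, 1 ≤ k → k ≤ d → a k = 1 := by
    intro k
    induction k using Nat.strong_induction_on with
    | _ k ih =>
      intro hk1 hkd
      match k, hk1 with
      | 1, _ => exact ha1
      | 2, _ => exact ha2
      | (m+3), _ =>
        have h1 := hOa (m + 1) (by omega) (by omega)
        have h2 := hOa (m + 2) (by omega) (by omega)
        have h3 : a (m + 1) = 1 := ih (m + 1) (by omega) (by omega) (by omega)
        have e1 : m + 1 + 1 = m + 2 := by omega
        have e2 : m + 2 + 1 = m + 3 := by omega
        rw [e1] at h1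
        rw [e2] at h2
        omega
  have had : a d = 1 := hak d (by omega) le_rfl
  intro S T hSA hTA hScard hTcard
  have hSb : b ∉ S := fun hb' => by simpa using hSA hb'
  have hTb : b ∉ T := fun hb' => by simpa using hTA hb'
  obtain ⟨h, hh⟩ := exists_smul_eq_of_numOrbits_eq_one _ had S T ⟨hScard, hSb⟩ ⟨hTcard, hTb⟩
  exact ⟨↑h, h.2, by rw [← Subgroup.smul_def]; exact hh⟩
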